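/- Let ρ be a density operator on a finite-dimensional space with U(1) representation U(θ). If ρ is invariant under U(2π/l) for a positive integer l, then ρ^(k) = 0 for every k that is not a multiple of l. Conversely, if ρ^(k) = 0 for all k not a multiple of l, then ρ is invariant under U(2π/l). -/

import Mathlib

open Complex Matrix MeasureTheory
open scoped ComplexOrder

/-- The unitary representation of U(1) on a finite-dimensional Hilbert space with
orthonormal basis indexed by `ι`, where basis vector `i` carries integer charge `c i`:
`U(θ) = Σ_n e^{inθ} Π_n`. -/
noncomputable def Urep {ι : Type*} [Fintype ι] [DecidableEq ι] (c : ι → ℤ) (θ : ℝ) :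
    Matrix ι ι ℂ :=
  Matrix.diagonal fun i => Complex.exp (Complex.I * (c i : ℂ) * (θ : ℂ))

/-- The mode-`k` component of an operator: `A^(k) = Σ_n Π_{n+k} A Π_n`. -/
def modeComp {ι : Type*} [Fintype ι] [DecidableEq ι] (c : ι → ℤ) (k : ℤ)
    (A : Matrix ι ι ℂ) : Matrix ι ι ℂ :=
  Matrix.of fun i j => if c i - c j = k then A i j else 0

/-- The trace norm `‖A‖₁ = tr √(A†A)`. -/
noncomputable def traceNorm {ι : Type*} [Fintype ι] [DecidableEq ι]
    (A : Matrix ι ι ℂ) : ℝ :=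
  (((Matrix.posSemidef_conjTranspose_mul_self A).1.eigenvectorUnitary : Matrix ι ι ℂ) *
      Matrix.diagonal (((↑) : ℝ → ℂ) ∘ (Real.sqrt ∘ (Matrix.posSemidef_conjTranspose_mul_self A).1.eigenvalues)) *
      (star (Matrix.posSemidef_conjTranspose_mul_self A).1.eigenvectorUnitary : Matrix ι ι ℂ)).trace.re

/-- The Choi matrix of a linear superoperator. -/
noncomputable def choi {ι κ : Type*} [Fintype ι] [DecidableEq ι] [Fintype κ]
    (E : Matrix ι ι ℂ →ₗ[ℂ] Matrix κ κ ℂ) : Matrix (ι × κ) (ι × κ) ℂ :=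
  Matrix.of fun p q => E (Matrix.single p.1 q.1 1) p.2 q.2

/-- A quantum channel: completely positive (positive semidefinite Choi matrix)
and trace preserving. -/
def IsCPTP {ι κ : Type*} [Fintype ι] [DecidableEq ι] [Fintype κ]
    (E : Matrix ι ι ℂ →ₗ[ℂ] Matrix κ κ ℂ) : Prop :=
  (choi E).PosSemidef ∧ ∀ A : Matrix ι ι ℂ, (E A).trace = A.trace

/-- U(1)-covariance of a superoperator with respect to input charges `c`
and output charges `d`. -/
def IsCovariant {ι κ : Type*} [Fintype ι] [DecidableEq ι] [Fintype κ] [DecidableEq κ]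
    (c : ι → ℤ) (d : κ → ℤ) (E : Matrix ι ι ℂ →ₗ[ℂ] Matrix κ κ ℂ) : Prop :=
  ∀ (θ : ℝ) (X : Matrix ι ι ℂ),
    E (Urep c θ * X * (Urep c θ)ᴴ) = Urep d θ * E X * (Urep d θ)ᴴ

/-- A density operator (quantum state). -/
def IsDensity {ι : Type*} [Fintype ι] (ρ : Matrix ι ι ℂ) : Prop :=
  ρ.PosSemidef ∧ ρ.trace = 1

lemma exp_key (l : ℕ) (hl : 0 < l) (m : ℤ) :
    Complex.exp (Complex.I * (m : ℂ) * ((2 * Real.pi / l : ℝ) : ℂ)) = 1 ↔ (l : ℤ) ∣ m := by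
  rw [Complex.exp_eq_one_iff]
  have hl0 : (l : ℂ) ≠ 0 := Nat.cast_ne_zero.mpr hl.ne'
  have hπ : (Real.pi : ℂ) ≠ 0 := Complex.ofReal_ne_zero.mpr Real.pi_ne_zero
  have h2 : (2 : ℂ) * Real.pi ≠ 0 := by simp [hπ]
  constructor
  · rintro ⟨n, hn⟩
    refine ⟨n, ?_⟩
    have : (m : ℂ) = l * n := by
      push_cast at hn
      field_simp at hn
      apply mul_left_cancel₀ (mul_ne_zero Complex.I_ne_zero h2)
      linear_combination (Complex.I * (2 * (Real.pi : ℂ))) * hn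
    exact_mod_cast this
  · rintro ⟨n, rfl⟩
    refine ⟨n, ?_⟩
    push_cast
    field_simp

lemma entry_key {ι : Type*} [Fintype ι] [DecidableEq ι] (c : ι → ℤ) (θ : ℝ)
    (ρ : Matrix ι ι ℂ) (i j : ι) :
    (Urep c θ * ρ * (Urep c θ)ᴴ) i j
      = Complex.exp (Complex.I * ((c i - c j : ℤ) : ℂ) * (θ : ℂ)) * ρ i j := by
  have hstar : (starRingEnd ℂ) (Complex.exp (Complex.I * (c j : ℂ) * (θ : ℂ)))
      = Complex.exp (-(Complex.I * (c j : ℂ) * (θ : ℂ))) := by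
    rw [← Complex.exp_conj]
    congr 1
    simp [_root_.map_mul, Complex.conj_I, Complex.conj_ofReal]
  simp only [Urep, Matrix.diagonal_conjTranspose, Matrix.mul_diagonal,
    Matrix.diagonal_mul, Pi.star_apply, RCLike.star_def, hstar]
  rw [mul_comm, ← mul_assoc, ← Complex.exp_add]
  congr 2
  push_cast
  ring

/-- a state ρ is invariant under `U(2π/l)` if and only if `ρ^(k) = 0`
for every k that is not a multiple of l. -/
theorem stmt_7 {ι : Type*} [Fintype ι] [DecidableEq ι] (c : ι → ℤ)
    (ρ : Matrix ι ι ℂ) (hρ : IsDensity ρ) (l : ℕ) (hl : 0 < l) :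
    Urep c (2 * Real.pi / l) * ρ * (Urep c (2 * Real.pi / l))ᴴ = ρ
      ↔ ∀ k : ℤ, ¬ ((l : ℤ) ∣ k) → modeComp c k ρ = 0 := by
  constructor
  · intro hU k hk
    ext i j
    simp only [modeComp, Matrix.of_apply, Matrix.zero_apply]
    split_ifs with h
    · have hent := congrFun (congrFun hU i) j
      rw [entry_key] at hent
      have hne : Complex.exp (Complex.I * ((c i - c j : ℤ) : ℂ)
          * ((2 * Real.pi / l : ℝ) : ℂ)) ≠ 1 := by
        rw [Ne, exp_key l hl, h]
        exact hk
      by_contra hz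
      exact hne (mul_right_cancel₀ hz (by rw [hent, one_mul]))
    · rfl
  · intro h
    ext i j
    rw [entry_key]
    by_cases hd : (l : ℤ) ∣ (c i - c j)
    · rw [(exp_key l hl _).mpr hd, one_mul]
    · have := congrFun (congrFun (h (c i - c j) hd) i) j
      simp [modeComp] at this
      rw [this, mul_zero]
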